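/- (Lemma 3: the influence function of the ratio parameter has mean zero.) Let π0(x,z) := z·e(x) + (1−z)·(1−e(x)), let m_0, m_1 be versions of E[Y | X, Z=0] and E[Y | X, Z=1], and ℓ_0, ℓ_1 be versions of E[A | X, Z=0] and E[A | X, Z=1]. Set γ0 := m_1 − m_0, δ0 := ℓ_1 − ℓ_0, Γ0 := E[γ0(X)], Δ0 := E[δ0(X)], and assume Δ0 ≠ 0, with χ0 := Γ0/Δ0. Define χ̇*0 := (1/Δ0)·( (2Z−1)/π0(X,Z) · [ Y − m_Z(X) − χ0·(A − ℓ_Z(X)) ] + γ0(X) − χ0·δ0(X) ). Then E[χ̇*0] = 0. -/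

import Mathlib

open MeasureTheory ProbabilityTheory

private lemma int_bdd' {Ω : Type*} [MeasurableSpace Ω] (P : Measure Ω) [IsFiniteMeasure P]
    {f : Ω → ℝ} (hf : Measurable f) {C : ℝ} (h : ∀ ω, |f ω| ≤ C) :
    Integrable f P :=
  (integrable_const C).mono' hf.aestronglyMeasurable (Filter.Eventually.of_forall h)

private lemma stmt12_ae_le {Ω S : Type*} [MeasurableSpace Ω] [MeasurableSpace S]
    (P : Measure Ω) [IsProbabilityMeasure P]
    (X : Ω → S) (hX : Measurable X)
    (M : Ω → ℝ) (hM : Measurable M) (hM01 : ∀ ω, M ω = 0 ∨ M ω = 1)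
    (w : S → ℝ) (hw : Measurable w) (ε : ℝ) (hε : 0 < ε) (hwε : ∀ x, ε ≤ w x)
    (hw1 : ∀ x, w x ≤ 1)
    (hpos : ∀ g : S → ℝ, Measurable g → (∃ C, ∀ x, |g x| ≤ C) →
      ∫ ω, M ω * g (X ω) ∂P = ∫ ω, w (X ω) * g (X ω) ∂P)
    (W : Ω → ℝ) (hWm : Measurable W)
    (f : S → ℝ) (hf : Measurable f)
    (C : ℝ) (hW : ∀ ω, |W ω| ≤ C)
    (hver : ∀ g : S → ℝ, Measurable g → (∃ D, ∀ x, |g x| ≤ D) →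
      ∫ ω, W ω * M ω * g (X ω) ∂P = ∫ ω, f (X ω) * M ω * g (X ω) ∂P) :
    ∀ᵐ ω ∂P, f (X ω) ≤ C := by
  rcases isEmpty_or_nonempty Ω with hE | hN
  · filter_upwards with ω; exact (IsEmpty.false ω).elim
  have hC0 : 0 ≤ C := le_trans (abs_nonneg _) (hW (Classical.arbitrary Ω))
  have hMnn : ∀ ω, 0 ≤ M ω := by intro ω; rcases hM01 ω with h | h <;> simp [h]
  have hM1 : ∀ ω, M ω ≤ 1 := by intro ω; rcases hM01 ω with h | h <;> simp [h]
  have key : ∀ n : ℕ, ∀ᵐ ω ∂P, ¬ (C < f (X ω) ∧ f (X ω) ≤ C + n) := by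
    intro n
    set g : S → ℝ := fun x => if C < f x ∧ f x ≤ C + n then (1:ℝ) else 0 with hg
    have hgs : MeasurableSet {x | C < f x ∧ f x ≤ C + n} :=
      (measurableSet_lt measurable_const hf).inter (measurableSet_le hf measurable_const)
    have hgm : Measurable g := Measurable.ite hgs measurable_const measurable_const
    have hgmX : Measurable (fun ω => g (X ω)) := hgm.comp hX
    have hgnn : ∀ x, 0 ≤ g x := by intro x; simp only [hg]; split <;> norm_num
    have hg1 : ∀ x, g x ≤ 1 := by intro x; simp only [hg]; split <;> norm_num
    have hgb : ∀ x, |g x| ≤ 1 := by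
      intro x; rw [abs_of_nonneg (hgnn x)]; exact hg1 x
    have hfg : ∀ x, |f x * g x| ≤ |C| + n := by
      intro x
      simp only [hg]
      split
      · next hc =>
        rw [mul_one, abs_le]
        constructor
        · nlinarith [neg_abs_le C, hc.1]
        · nlinarith [le_abs_self C, hc.2]
      · simp [abs_nonneg, add_nonneg (abs_nonneg C) n.cast_nonneg]
    have hMb : ∀ ω, |M ω| ≤ 1 := by
      intro ω; rw [abs_of_nonneg (hMnn ω)]; exact hM1 ω
    have iWMg : Integrable (fun ω => W ω * M ω * g (X ω)) P := by
      apply int_bdd' P ((hWm.mul hM).mul hgmX) (C := C)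
      intro ω
      calc |W ω * M ω * g (X ω)| = |W ω| * |M ω| * |g (X ω)| := by
            rw [abs_mul, abs_mul]
        _ ≤ C * 1 * 1 :=
            mul_le_mul (mul_le_mul (hW ω) (hMb ω) (abs_nonneg _) hC0) (hgb _)
              (abs_nonneg _) (by positivity)
        _ = C := by ring
    have ifMg : Integrable (fun ω => f (X ω) * M ω * g (X ω)) P := by
      apply int_bdd' P (((hf.comp hX).mul hM).mul hgmX) (C := |C| + n)
      intro ω
      calc |f (X ω) * M ω * g (X ω)| = |f (X ω) * g (X ω)| * |M ω| := by
            rw [show f (X ω) * M ω * g (X ω) = f (X ω) * g (X ω) * M ω from by ring,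
              abs_mul]
        _ ≤ (|C| + n) * 1 :=
            mul_le_mul (hfg _) (hMb ω) (abs_nonneg _) (by positivity)
        _ = |C| + n := by ring
    have iMg : Integrable (fun ω => M ω * g (X ω)) P := by
      apply int_bdd' P (hM.mul hgmX) (C := 1)
      intro ω
      calc |M ω * g (X ω)| = |M ω| * |g (X ω)| := abs_mul _ _
        _ ≤ 1 * 1 := mul_le_mul (hMb ω) (hgb _) (abs_nonneg _) one_pos.le
        _ = 1 := by ring
    have iCMg : Integrable (fun ω => C * (M ω * g (X ω))) P := iMg.const_mul C
    set h : Ω → ℝ := fun ω => (f (X ω) - C) * (M ω * g (X ω)) with hh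
    have hhn : ∀ ω, 0 ≤ h ω := by
      intro ω
      simp only [hh, hg]
      split
      · next hc =>
          exact mul_nonneg (by linarith [hc.1]) (mul_nonneg (hMnn ω) (by norm_num))
      · next hc =>
          simp
    have hhint : Integrable h P := by
      have : h = fun ω => f (X ω) * M ω * g (X ω) - C * (M ω * g (X ω)) := by
        funext ω; simp only [hh]; ring
      rw [this]; exact ifMg.sub iCMg
    have hle : ∫ ω, h ω ∂P ≤ 0 := by
      have e1 : ∫ ω, h ω ∂P
          = ∫ ω, f (X ω) * M ω * g (X ω) ∂P - ∫ ω, C * (M ω * g (X ω)) ∂P := by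
        rw [← integral_sub ifMg iCMg]; congr 1; funext ω; simp only [hh]; ring
      have e2 := (hver g hgm ⟨1, hgb⟩).symm
      have e3 : ∫ ω, W ω * M ω * g (X ω) ∂P - ∫ ω, C * (M ω * g (X ω)) ∂P
          = ∫ ω, (W ω - C) * (M ω * g (X ω)) ∂P := by
        rw [← integral_sub iWMg iCMg]; congr 1; funext ω; ring
      rw [e1, e2, e3]
      apply integral_nonpos
      intro ω
      exact mul_nonpos_of_nonpos_of_nonneg (by linarith [le_abs_self (W ω), hW ω])
        (mul_nonneg (hMnn ω) (hgnn _))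
    have hz : h =ᵐ[P] 0 := by
      rw [← integral_eq_zero_iff_of_nonneg hhn hhint]
      exact le_antisymm hle (integral_nonneg hhn)
    have hMg0 : (fun ω => M ω * g (X ω)) =ᵐ[P] 0 := by
      filter_upwards [hz] with ω hω
      by_contra hne
      have hne' : M ω * g (X ω) ≠ 0 := by simpa using hne
      have hgω : g (X ω) ≠ 0 := fun h0 => hne' (by rw [h0, mul_zero])
      have hcond : C < f (X ω) ∧ f (X ω) ≤ C + n := by
        by_contra hc; apply hgω; simp only [hg]; rw [if_neg hc]
      have h0 : (f (X ω) - C) * (M ω * g (X ω)) = 0 := hω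
      rcases mul_eq_zero.mp h0 with h1 | h1
      · linarith [hcond.1]
      · exact hne' h1
    have hintMg : ∫ ω, M ω * g (X ω) ∂P = 0 :=
      (integral_eq_zero_iff_of_nonneg (fun ω => mul_nonneg (hMnn ω) (hgnn _)) iMg).mpr hMg0
    have hwg : ∫ ω, w (X ω) * g (X ω) ∂P = 0 := by
      rw [← hpos g hgm ⟨1, hgb⟩]; exact hintMg
    have igX : Integrable (fun ω => g (X ω)) P := int_bdd' P hgmX (fun ω => hgb (X ω))
    have iwg : Integrable (fun ω => w (X ω) * g (X ω)) P := by
      apply int_bdd' P ((hw.comp hX).mul hgmX) (C := 1)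
      intro ω
      calc |w (X ω) * g (X ω)| = |w (X ω)| * |g (X ω)| := abs_mul _ _
        _ ≤ 1 * 1 := mul_le_mul (by
              rw [abs_of_nonneg (le_trans hε.le (hwε _))]; exact hw1 _) (hgb _)
              (abs_nonneg _) one_pos.le
        _ = 1 := by ring
    have hεg : ε * ∫ ω, g (X ω) ∂P ≤ 0 := by
      rw [← integral_const_mul]
      rw [← hwg]
      apply integral_mono (igX.const_mul ε) iwg
      intro ω
      exact mul_le_mul_of_nonneg_right (hwε _) (hgnn _)
    have hgint0 : ∫ ω, g (X ω) ∂P = 0 := by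
      have h1 : 0 ≤ ∫ ω, g (X ω) ∂P := integral_nonneg (fun ω => hgnn _)
      nlinarith
    have hg0 : (fun ω => g (X ω)) =ᵐ[P] 0 :=
      (integral_eq_zero_iff_of_nonneg (fun ω => hgnn _) igX).mp hgint0
    filter_upwards [hg0] with ω hω
    intro hc
    have : g (X ω) = 1 := by simp only [hg]; rw [if_pos hc]
    rw [show g (X ω) = 0 from hω] at this
    norm_num at this
  rw [← ae_all_iff] at key
  filter_upwards [key] with ω hω
  by_contra hc
  push_neg at hc
  obtain ⟨n, hn⟩ := exists_nat_ge (f (X ω) - C)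
  exact hω n ⟨hc, by linarith⟩

private lemma stmt12_ae_abs_le {Ω S : Type*} [MeasurableSpace Ω] [MeasurableSpace S]
    (P : Measure Ω) [IsProbabilityMeasure P]
    (X : Ω → S) (hX : Measurable X)
    (M : Ω → ℝ) (hM : Measurable M) (hM01 : ∀ ω, M ω = 0 ∨ M ω = 1)
    (w : S → ℝ) (hw : Measurable w) (ε : ℝ) (hε : 0 < ε) (hwε : ∀ x, ε ≤ w x)
    (hw1 : ∀ x, w x ≤ 1)
    (hpos : ∀ g : S → ℝ, Measurable g → (∃ C, ∀ x, |g x| ≤ C) →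
      ∫ ω, M ω * g (X ω) ∂P = ∫ ω, w (X ω) * g (X ω) ∂P)
    (W : Ω → ℝ) (hWm : Measurable W)
    (f : S → ℝ) (hf : Measurable f)
    (C : ℝ) (hW : ∀ ω, |W ω| ≤ C)
    (hver : ∀ g : S → ℝ, Measurable g → (∃ D, ∀ x, |g x| ≤ D) →
      ∫ ω, W ω * M ω * g (X ω) ∂P = ∫ ω, f (X ω) * M ω * g (X ω) ∂P) :
    ∀ᵐ ω ∂P, |f (X ω)| ≤ C := by
  have h1 := stmt12_ae_le P X hX M hM hM01 w hw ε hε hwε hw1 hpos W hWm f hf C hW hver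
  have hver' : ∀ g : S → ℝ, Measurable g → (∃ D, ∀ x, |g x| ≤ D) →
      ∫ ω, (-W ω) * M ω * g (X ω) ∂P = ∫ ω, (fun x => -f x) (X ω) * M ω * g (X ω) ∂P := by
    intro g hg hgb
    have e1 : (fun ω => (-W ω) * M ω * g (X ω)) = fun ω => -(W ω * M ω * g (X ω)) := by
      funext ω; ring
    have e2 : (fun ω => (fun x => -f x) (X ω) * M ω * g (X ω))
        = fun ω => -(f (X ω) * M ω * g (X ω)) := by
      funext ω; ring
    rw [e1, e2, integral_neg, integral_neg, hver g hg hgb]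
  have h2 := stmt12_ae_le P X hX M hM hM01 w hw ε hε hwε hw1 hpos
    (fun ω => -W ω) hWm.neg (fun x => -f x) hf.neg C (fun ω => by
      rw [abs_neg]; exact hW ω) hver'
  filter_upwards [h1, h2] with ω a b
  rw [abs_le]
  exact ⟨by linarith [b], a⟩


/-- Lemma 3: the influence function of the ratio parameter χ0 = Γ0/Δ0 has
mean zero: with γ0 = m1 − m0, δ0 = ℓ1 − ℓ0, Γ0 = E[γ0(X)], Δ0 = E[δ0(X)] ≠ 0 and
χ0 = Γ0/Δ0,
E[(1/Δ0)·((2Z−1)/π0(X,Z)·(Y − m_Z(X) − χ0·(A − ℓ_Z(X))) + γ0(X) − χ0·δ0(X))] = 0. -/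
theorem stmt_12
    {Ω : Type*} [MeasurableSpace Ω] (P : Measure Ω) [IsProbabilityMeasure P]
    {S : Type*} [mS : MeasurableSpace S]
    (X : Ω → S) (hX : Measurable X)
    (Z A Y : Ω → ℝ) (hZ : Measurable Z) (hA : Measurable A) (hY : Measurable Y)
    (hZ01 : ∀ ω, Z ω = 0 ∨ Z ω = 1)
    (hA01 : ∀ ω, A ω = 0 ∨ A ω = 1)
    (hYb : ∃ C, ∀ ω, |Y ω| ≤ C)
    (e : S → ℝ) (he : Measurable e) (ε : ℝ) (hε : 0 < ε) (hε2 : ε < 1/2)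
    (hebd : ∀ x, ε ≤ e x ∧ e x ≤ 1 - ε)
    (hVe : ∀ g : S → ℝ, Measurable g → (∃ C, ∀ x, |g x| ≤ C) →
      ∫ ω, Z ω * g (X ω) ∂P = ∫ ω, e (X ω) * g (X ω) ∂P)
    (m0 m1 l0 l1 : S → ℝ)
    (hm0 : Measurable m0) (hm1 : Measurable m1)
    (hl0 : Measurable l0) (hl1 : Measurable l1)
    (hm0v : ∀ g : S → ℝ, Measurable g → (∃ C, ∀ x, |g x| ≤ C) →
      ∫ ω, Y ω * (if Z ω = 0 then (1:ℝ) else 0) * g (X ω) ∂P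
        = ∫ ω, m0 (X ω) * (if Z ω = 0 then (1:ℝ) else 0) * g (X ω) ∂P)
    (hm1v : ∀ g : S → ℝ, Measurable g → (∃ C, ∀ x, |g x| ≤ C) →
      ∫ ω, Y ω * (if Z ω = 1 then (1:ℝ) else 0) * g (X ω) ∂P
        = ∫ ω, m1 (X ω) * (if Z ω = 1 then (1:ℝ) else 0) * g (X ω) ∂P)
    (hl0v : ∀ g : S → ℝ, Measurable g → (∃ C, ∀ x, |g x| ≤ C) →
      ∫ ω, A ω * (if Z ω = 0 then (1:ℝ) else 0) * g (X ω) ∂P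
        = ∫ ω, l0 (X ω) * (if Z ω = 0 then (1:ℝ) else 0) * g (X ω) ∂P)
    (hl1v : ∀ g : S → ℝ, Measurable g → (∃ C, ∀ x, |g x| ≤ C) →
      ∫ ω, A ω * (if Z ω = 1 then (1:ℝ) else 0) * g (X ω) ∂P
        = ∫ ω, l1 (X ω) * (if Z ω = 1 then (1:ℝ) else 0) * g (X ω) ∂P)
    (Γ0 Δ0 χ0 : ℝ)
    (hΓ0 : Γ0 = ∫ ω, m1 (X ω) - m0 (X ω) ∂P)
    (hΔ0 : Δ0 = ∫ ω, l1 (X ω) - l0 (X ω) ∂P)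
    (hΔ0ne : Δ0 ≠ 0)
    (hχ0 : χ0 = Γ0 / Δ0) :
    (∫ ω, (1 / Δ0) * ((2 * Z ω - 1) / (Z ω * e (X ω) + (1 - Z ω) * (1 - e (X ω)))
          * (Y ω - (if Z ω = 1 then m1 (X ω) else m0 (X ω))
            - χ0 * (A ω - (if Z ω = 1 then l1 (X ω) else l0 (X ω))))
        + ((m1 (X ω) - m0 (X ω)) - χ0 * (l1 (X ω) - l0 (X ω)))) ∂P) = 0 := by
  classical
  obtain ⟨C0, hC0⟩ := hYb
  set CY := |C0| with hCYdef
  have hYC : ∀ ω, |Y ω| ≤ CY := fun ω => (hC0 ω).trans (le_abs_self _)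
  have hAb : ∀ ω, |A ω| ≤ 1 := by intro ω; rcases hA01 ω with h | h <;> simp [h]
  have hZb : ∀ ω, |Z ω| ≤ 1 := by intro ω; rcases hZ01 ω with h | h <;> simp [h]
  have he1 : ∀ x, ε ≤ e x := fun x => (hebd x).1
  have he2 : ∀ x, ε ≤ 1 - e x := fun x => by linarith [(hebd x).2]
  have heu : ∀ x, e x ≤ 1 := fun x => by linarith [(hebd x).2]
  have heu' : ∀ x, 1 - e x ≤ 1 := fun x => by linarith [he1 x]
  have hM1m : Measurable (fun ω => if Z ω = 1 then (1:ℝ) else 0) :=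
    Measurable.ite (hZ (measurableSet_singleton 1)) measurable_const measurable_const
  have hM0m : Measurable (fun ω => if Z ω = 0 then (1:ℝ) else 0) :=
    Measurable.ite (hZ (measurableSet_singleton 0)) measurable_const measurable_const
  have hM101 : ∀ ω, (if Z ω = 1 then (1:ℝ) else 0) = 0
      ∨ (if Z ω = 1 then (1:ℝ) else 0) = 1 := by
    intro ω; split <;> simp
  have hM001 : ∀ ω, (if Z ω = 0 then (1:ℝ) else 0) = 0
      ∨ (if Z ω = 0 then (1:ℝ) else 0) = 1 := by
    intro ω; split <;> simp
  have hM1b : ∀ ω, |if Z ω = 1 then (1:ℝ) else 0| ≤ 1 := by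
    intro ω; split <;> norm_num
  have hM0b : ∀ ω, |if Z ω = 0 then (1:ℝ) else 0| ≤ 1 := by
    intro ω; split <;> norm_num
  have ibdd : ∀ (F : Ω → ℝ), Measurable F → ∀ (c : ℝ), (∀ᵐ ω ∂P, |F ω| ≤ c) →
      Integrable F P :=
    fun F hF c hb => (integrable_const c).mono' hF.aestronglyMeasurable hb
  -- positivity conditions for the two indicators
  have hpos1 : ∀ g : S → ℝ, Measurable g → (∃ C, ∀ x, |g x| ≤ C) →
      ∫ ω, (if Z ω = 1 then (1:ℝ) else 0) * g (X ω) ∂P = ∫ ω, e (X ω) * g (X ω) ∂P := by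
    intro g hg hb
    rw [show (fun ω => (if Z ω = 1 then (1:ℝ) else 0) * g (X ω))
        = fun ω => Z ω * g (X ω) from funext fun ω => by
      rcases hZ01 ω with h | h <;> simp [h]]
    exact hVe g hg hb
  have hpos0 : ∀ g : S → ℝ, Measurable g → (∃ C, ∀ x, |g x| ≤ C) →
      ∫ ω, (if Z ω = 0 then (1:ℝ) else 0) * g (X ω) ∂P
        = ∫ ω, (1 - e (X ω)) * g (X ω) ∂P := by
    intro g hg hb
    obtain ⟨D, hD⟩ := hb
    have hD0 : ∀ x, 0 ≤ D := fun x => (abs_nonneg _).trans (hD x)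
    have i_g : Integrable (fun ω => g (X ω)) P :=
      ibdd _ (hg.comp hX) D (Filter.Eventually.of_forall fun ω => hD _)
    have i_Zg : Integrable (fun ω => Z ω * g (X ω)) P := by
      apply ibdd _ (hZ.mul (hg.comp hX)) (1 * D)
      filter_upwards with ω
      simp only [Pi.mul_apply, Function.comp_apply]
      rw [abs_mul]
      exact mul_le_mul (hZb ω) (hD _) (abs_nonneg _) one_pos.le
    have i_eg : Integrable (fun ω => e (X ω) * g (X ω)) P := by
      apply ibdd _ ((he.comp hX).mul (hg.comp hX)) (1 * D)
      filter_upwards with ω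
      simp only [Pi.mul_apply, Function.comp_apply]
      rw [abs_mul]
      refine mul_le_mul ?_ (hD _) (abs_nonneg _) one_pos.le
      show |e (X ω)| ≤ 1
      rw [abs_of_nonneg (le_trans hε.le (he1 _))]; exact heu _
    calc ∫ ω, (if Z ω = 0 then (1:ℝ) else 0) * g (X ω) ∂P
        = ∫ ω, g (X ω) - Z ω * g (X ω) ∂P := by
          apply integral_congr_ae (Filter.Eventually.of_forall fun ω => ?_)
          rcases hZ01 ω with h | h <;> simp [h]
      _ = ∫ ω, g (X ω) ∂P - ∫ ω, Z ω * g (X ω) ∂P := integral_sub i_g i_Zg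
      _ = ∫ ω, g (X ω) ∂P - ∫ ω, e (X ω) * g (X ω) ∂P := by
          rw [hVe g hg ⟨D, hD⟩]
      _ = ∫ ω, g (X ω) - e (X ω) * g (X ω) ∂P := (integral_sub i_g i_eg).symm
      _ = ∫ ω, (1 - e (X ω)) * g (X ω) ∂P := by
          apply integral_congr_ae (Filter.Eventually.of_forall fun ω => ?_)
          ring
  -- a.e. bounds on the conditional-expectation versions
  have hm1ae : ∀ᵐ ω ∂P, |m1 (X ω)| ≤ CY :=
    stmt12_ae_abs_le P X hX _ hM1m hM101 e he ε hε he1 heu hpos1 Y hY m1 hm1 CY hYC hm1v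
  have hm0ae : ∀ᵐ ω ∂P, |m0 (X ω)| ≤ CY :=
    stmt12_ae_abs_le P X hX _ hM0m hM001 (fun x => 1 - e x) (measurable_const.sub he)
      ε hε he2 heu' hpos0 Y hY m0 hm0 CY hYC hm0v
  have hl1ae : ∀ᵐ ω ∂P, |l1 (X ω)| ≤ 1 :=
    stmt12_ae_abs_le P X hX _ hM1m hM101 e he ε hε he1 heu hpos1 A hA l1 hl1 1 hAb hl1v
  have hl0ae : ∀ᵐ ω ∂P, |l0 (X ω)| ≤ 1 :=
    stmt12_ae_abs_le P X hX _ hM0m hM001 (fun x => 1 - e x) (measurable_const.sub he)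
      ε hε he2 heu' hpos0 A hA l0 hl0 1 hAb hl0v
  -- the inverse propensity weights
  have hg1m : Measurable (fun x => (e x)⁻¹) := he.inv
  have hg0m : Measurable (fun x => (1 - e x)⁻¹) := (measurable_const.sub he).inv
  have hg1b : ∀ x, |(e x)⁻¹| ≤ ε⁻¹ := by
    intro x
    rw [abs_of_nonneg (inv_nonneg.mpr (le_trans hε.le (he1 x)))]
    exact inv_anti₀ hε (he1 x)
  have hg0b : ∀ x, |(1 - e x)⁻¹| ≤ ε⁻¹ := by
    intro x
    rw [abs_of_nonneg (inv_nonneg.mpr (le_trans hε.le (he2 x)))]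
    exact inv_anti₀ hε (he2 x)
  -- integrability of triple products
  have tri : ∀ (F G H : Ω → ℝ), Measurable F → Measurable G → Measurable H →
      ∀ (a b c : ℝ), (∀ᵐ ω ∂P, |F ω| ≤ a) → (∀ ω, |G ω| ≤ b) → (∀ ω, |H ω| ≤ c) →
      Integrable (fun ω => F ω * G ω * H ω) P := by
    intro F G H hF hG hH a b c ha hb hc
    apply ibdd _ ((hF.mul hG).mul hH) (a * b * c)
    filter_upwards [ha] with ω h1
    have hb0 : 0 ≤ b := (abs_nonneg _).trans (hb ω)
    have ha0 : 0 ≤ a := (abs_nonneg _).trans h1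
    simp only [Pi.mul_apply]
    rw [abs_mul, abs_mul]
    exact mul_le_mul (mul_le_mul h1 (hb ω) (abs_nonneg _) ha0) (hc ω)
      (abs_nonneg _) (mul_nonneg ha0 hb0)
  have i_Y1 : Integrable (fun ω => Y ω * (if Z ω = 1 then (1:ℝ) else 0) * (e (X ω))⁻¹) P :=
    tri _ _ _ hY hM1m (hg1m.comp hX) CY 1 ε⁻¹ (Filter.Eventually.of_forall hYC) hM1b
      (fun ω => hg1b (X ω))
  have i_m1 : Integrable (fun ω => m1 (X ω) * (if Z ω = 1 then (1:ℝ) else 0) * (e (X ω))⁻¹) P :=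
    tri _ _ _ (hm1.comp hX) hM1m (hg1m.comp hX) CY 1 ε⁻¹ hm1ae hM1b (fun ω => hg1b (X ω))
  have i_A1 : Integrable (fun ω => A ω * (if Z ω = 1 then (1:ℝ) else 0) * (e (X ω))⁻¹) P :=
    tri _ _ _ hA hM1m (hg1m.comp hX) 1 1 ε⁻¹ (Filter.Eventually.of_forall hAb) hM1b
      (fun ω => hg1b (X ω))
  have i_l1 : Integrable (fun ω => l1 (X ω) * (if Z ω = 1 then (1:ℝ) else 0) * (e (X ω))⁻¹) P :=
    tri _ _ _ (hl1.comp hX) hM1m (hg1m.comp hX) 1 1 ε⁻¹ hl1ae hM1b (fun ω => hg1b (X ω))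
  have i_Y0 : Integrable (fun ω => Y ω * (if Z ω = 0 then (1:ℝ) else 0) * (1 - e (X ω))⁻¹) P :=
    tri _ _ _ hY hM0m (hg0m.comp hX) CY 1 ε⁻¹ (Filter.Eventually.of_forall hYC) hM0b
      (fun ω => hg0b (X ω))
  have i_m0 : Integrable (fun ω => m0 (X ω) * (if Z ω = 0 then (1:ℝ) else 0) * (1 - e (X ω))⁻¹) P :=
    tri _ _ _ (hm0.comp hX) hM0m (hg0m.comp hX) CY 1 ε⁻¹ hm0ae hM0b (fun ω => hg0b (X ω))
  have i_A0 : Integrable (fun ω => A ω * (if Z ω = 0 then (1:ℝ) else 0) * (1 - e (X ω))⁻¹) P :=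
    tri _ _ _ hA hM0m (hg0m.comp hX) 1 1 ε⁻¹ (Filter.Eventually.of_forall hAb) hM0b
      (fun ω => hg0b (X ω))
  have i_l0 : Integrable (fun ω => l0 (X ω) * (if Z ω = 0 then (1:ℝ) else 0) * (1 - e (X ω))⁻¹) P :=
    tri _ _ _ (hl0.comp hX) hM0m (hg0m.comp hX) 1 1 ε⁻¹ hl0ae hM0b (fun ω => hg0b (X ω))
  have i_m1X : Integrable (fun ω => m1 (X ω)) P := ibdd _ (hm1.comp hX) CY hm1ae
  have i_m0X : Integrable (fun ω => m0 (X ω)) P := ibdd _ (hm0.comp hX) CY hm0ae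
  have i_l1X : Integrable (fun ω => l1 (X ω)) P := ibdd _ (hl1.comp hX) 1 hl1ae
  have i_l0X : Integrable (fun ω => l0 (X ω)) P := ibdd _ (hl0.comp hX) 1 hl0ae
  -- the four key version identities with g = inverse weights
  have key1 : ∫ ω, Y ω * (if Z ω = 1 then (1:ℝ) else 0) * (e (X ω))⁻¹ ∂P
      = ∫ ω, m1 (X ω) * (if Z ω = 1 then (1:ℝ) else 0) * (e (X ω))⁻¹ ∂P :=
    hm1v (fun x => (e x)⁻¹) hg1m ⟨ε⁻¹, hg1b⟩
  have key2 : ∫ ω, A ω * (if Z ω = 1 then (1:ℝ) else 0) * (e (X ω))⁻¹ ∂P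
      = ∫ ω, l1 (X ω) * (if Z ω = 1 then (1:ℝ) else 0) * (e (X ω))⁻¹ ∂P :=
    hl1v (fun x => (e x)⁻¹) hg1m ⟨ε⁻¹, hg1b⟩
  have key3 : ∫ ω, Y ω * (if Z ω = 0 then (1:ℝ) else 0) * (1 - e (X ω))⁻¹ ∂P
      = ∫ ω, m0 (X ω) * (if Z ω = 0 then (1:ℝ) else 0) * (1 - e (X ω))⁻¹ ∂P :=
    hm0v (fun x => (1 - e x)⁻¹) hg0m ⟨ε⁻¹, hg0b⟩
  have key4 : ∫ ω, A ω * (if Z ω = 0 then (1:ℝ) else 0) * (1 - e (X ω))⁻¹ ∂P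
      = ∫ ω, l0 (X ω) * (if Z ω = 0 then (1:ℝ) else 0) * (1 - e (X ω))⁻¹ ∂P :=
    hl0v (fun x => (1 - e x)⁻¹) hg0m ⟨ε⁻¹, hg0b⟩
  -- pointwise rewriting of the integrand
  have hpt : ∀ ω, (1 / Δ0) * ((2 * Z ω - 1) / (Z ω * e (X ω) + (1 - Z ω) * (1 - e (X ω)))
          * (Y ω - (if Z ω = 1 then m1 (X ω) else m0 (X ω))
            - χ0 * (A ω - (if Z ω = 1 then l1 (X ω) else l0 (X ω))))
        + ((m1 (X ω) - m0 (X ω)) - χ0 * (l1 (X ω) - l0 (X ω))))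
      = (1 / Δ0) * (((Y ω * (if Z ω = 1 then (1:ℝ) else 0) * (e (X ω))⁻¹
            - m1 (X ω) * (if Z ω = 1 then (1:ℝ) else 0) * (e (X ω))⁻¹)
          - χ0 * (A ω * (if Z ω = 1 then (1:ℝ) else 0) * (e (X ω))⁻¹
            - l1 (X ω) * (if Z ω = 1 then (1:ℝ) else 0) * (e (X ω))⁻¹))
        - ((Y ω * (if Z ω = 0 then (1:ℝ) else 0) * (1 - e (X ω))⁻¹
            - m0 (X ω) * (if Z ω = 0 then (1:ℝ) else 0) * (1 - e (X ω))⁻¹)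
          - χ0 * (A ω * (if Z ω = 0 then (1:ℝ) else 0) * (1 - e (X ω))⁻¹
            - l0 (X ω) * (if Z ω = 0 then (1:ℝ) else 0) * (1 - e (X ω))⁻¹))
        + ((m1 (X ω) - m0 (X ω)) - χ0 * (l1 (X ω) - l0 (X ω)))) := by
    intro ω
    rcases hZ01 ω with h | h <;> simp only [h] <;> norm_num
    · left; rw [div_eq_mul_inv]; ring
    · left; ring
  have iC1 : Integrable (fun ω => χ0 * (A ω * (if Z ω = 1 then (1:ℝ) else 0) * (e (X ω))⁻¹
      - l1 (X ω) * (if Z ω = 1 then (1:ℝ) else 0) * (e (X ω))⁻¹)) P :=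
    (i_A1.sub i_l1).const_mul χ0
  have iC0 : Integrable (fun ω => χ0 * (A ω * (if Z ω = 0 then (1:ℝ) else 0) * (1 - e (X ω))⁻¹
      - l0 (X ω) * (if Z ω = 0 then (1:ℝ) else 0) * (1 - e (X ω))⁻¹)) P :=
    (i_A0.sub i_l0).const_mul χ0
  have iB1 : Integrable (fun ω => Y ω * (if Z ω = 1 then (1:ℝ) else 0) * (e (X ω))⁻¹
      - m1 (X ω) * (if Z ω = 1 then (1:ℝ) else 0) * (e (X ω))⁻¹) P := i_Y1.sub i_m1
  have iB0 : Integrable (fun ω => Y ω * (if Z ω = 0 then (1:ℝ) else 0) * (1 - e (X ω))⁻¹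
      - m0 (X ω) * (if Z ω = 0 then (1:ℝ) else 0) * (1 - e (X ω))⁻¹) P := i_Y0.sub i_m0
  have iT1 : Integrable (fun ω => (Y ω * (if Z ω = 1 then (1:ℝ) else 0) * (e (X ω))⁻¹
      - m1 (X ω) * (if Z ω = 1 then (1:ℝ) else 0) * (e (X ω))⁻¹)
      - χ0 * (A ω * (if Z ω = 1 then (1:ℝ) else 0) * (e (X ω))⁻¹
        - l1 (X ω) * (if Z ω = 1 then (1:ℝ) else 0) * (e (X ω))⁻¹)) P := iB1.sub iC1
  have iT0 : Integrable (fun ω => (Y ω * (if Z ω = 0 then (1:ℝ) else 0) * (1 - e (X ω))⁻¹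
      - m0 (X ω) * (if Z ω = 0 then (1:ℝ) else 0) * (1 - e (X ω))⁻¹)
      - χ0 * (A ω * (if Z ω = 0 then (1:ℝ) else 0) * (1 - e (X ω))⁻¹
        - l0 (X ω) * (if Z ω = 0 then (1:ℝ) else 0) * (1 - e (X ω))⁻¹)) P := iB0.sub iC0
  have iT : Integrable (fun ω => ((Y ω * (if Z ω = 1 then (1:ℝ) else 0) * (e (X ω))⁻¹
      - m1 (X ω) * (if Z ω = 1 then (1:ℝ) else 0) * (e (X ω))⁻¹)
      - χ0 * (A ω * (if Z ω = 1 then (1:ℝ) else 0) * (e (X ω))⁻¹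
        - l1 (X ω) * (if Z ω = 1 then (1:ℝ) else 0) * (e (X ω))⁻¹))
      - ((Y ω * (if Z ω = 0 then (1:ℝ) else 0) * (1 - e (X ω))⁻¹
      - m0 (X ω) * (if Z ω = 0 then (1:ℝ) else 0) * (1 - e (X ω))⁻¹)
      - χ0 * (A ω * (if Z ω = 0 then (1:ℝ) else 0) * (1 - e (X ω))⁻¹
        - l0 (X ω) * (if Z ω = 0 then (1:ℝ) else 0) * (1 - e (X ω))⁻¹))) P := iT1.sub iT0
  have iG : Integrable (fun ω => m1 (X ω) - m0 (X ω)) P := i_m1X.sub i_m0X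
  have iH : Integrable (fun ω => χ0 * (l1 (X ω) - l0 (X ω))) P :=
    (i_l1X.sub i_l0X).const_mul χ0
  have iT2 : Integrable (fun ω => (m1 (X ω) - m0 (X ω)) - χ0 * (l1 (X ω) - l0 (X ω))) P :=
    iG.sub iH
  rw [integral_congr_ae (Filter.Eventually.of_forall hpt)]
  rw [integral_const_mul]
  rw [integral_add iT iT2]
  rw [integral_sub iT1 iT0]
  rw [integral_sub iB1 iC1]
  rw [integral_sub iB0 iC0]
  rw [integral_sub iG iH]
  rw [integral_const_mul, integral_const_mul, integral_const_mul]
  rw [integral_sub i_Y1 i_m1, integral_sub i_A1 i_l1, integral_sub i_Y0 i_m0,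
    integral_sub i_A0 i_l0]
  rw [key1, key2, key3, key4, ← hΓ0, ← hΔ0, hχ0]
  field_simp
  ring
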